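/- arXiv:2007.00237 — 7 statements merged into one kernel-verified Lean document; each statement's English description precedes it below -/
import Mathlib

section
/- (Theorem 1, unbiased estimator for decomposable losses) Let l* : {0,1} × ℝ → ℝ decompose as l*(y,ŷ) = l*₊(ŷ) if y = 1 and l*(y,ŷ) = l*₋(ŷ) if y = 0. Define l₊(ŷ) := p⁻¹ (l*₊(ŷ) + (p−1) l*₋(ŷ)) and l(y,ŷ) := l₊(ŷ) if y = 1, l*₋(ŷ) if y = 0. Then for every fixed prediction ŷ ∈ ℝ, E[l*(Y*, ŷ)] = E[l(Y, ŷ)]. -/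
open MeasureTheory
open scoped Classical

lemma integral_ite_mem {Ω : Type*} [MeasurableSpace Ω] (P : Measure Ω)
    [IsProbabilityMeasure P] (s : Set Ω) (hs : MeasurableSet s) (a b : ℝ) :
    ∫ ω, (if ω ∈ s then a else b) ∂P = b + (a - b) * (P s).toReal := by
  have h : (fun ω => (if ω ∈ s then a else b))
      = fun ω => Set.indicator s (fun _ => a - b) ω + b := by
    funext ω; by_cases h : ω ∈ s <;> simp [h]
  rw [h, integral_add ((integrable_indicator_iff hs).2 (by simp)) (integrable_const b),
    integral_indicator_const _ hs]
  simp [mul_comm, add_comm, measureReal_def]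

/-- Theorem 1: unbiased estimator for losses that decompose over the binary label.
With `l*(y,ŷ) = l*₊(ŷ)` for `y = 1` and `l*₋(ŷ)` for `y = 0`, and the reweighted loss
`l(1,ŷ) = p⁻¹ (l*₊(ŷ) + (p−1) l*₋(ŷ))`, `l(0,ŷ) = l*₋(ŷ)`, we have
`E[l*(Y*, ŷ)] = E[l(Y, ŷ)]` for every fixed prediction `ŷ`. -/
theorem unbiased_estimator_decomposable_loss
    {Ω : Type*} [MeasurableSpace Ω] (P : Measure Ω) [IsProbabilityMeasure P]
    (Y Ystar : Ω → ℝ)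
    (hY : ∀ ω, Y ω = 0 ∨ Y ω = 1) (hYs : ∀ ω, Ystar ω = 0 ∨ Ystar ω = 1)
    (hmY : Measurable Y) (hmYs : Measurable Ystar)
    (p : ℝ) (hp0 : 0 < p) (hp1 : p ≤ 1)
    (hnofp : P {ω | Y ω = 1 ∧ Ystar ω = 0} = 0)
    (hpos : 0 < P {ω | Ystar ω = 1})
    (hprop : P {ω | Y ω = 1 ∧ Ystar ω = 1} = ENNReal.ofReal p * P {ω | Ystar ω = 1})
    (lp lm : ℝ → ℝ) (yhat : ℝ) :
    ∫ ω, (if Ystar ω = 1 then lp yhat else lm yhat) ∂P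
      = ∫ ω, (if Y ω = 1 then p⁻¹ * (lp yhat + (p - 1) * lm yhat) else lm yhat) ∂P := by
  set s : Set Ω := {ω | Ystar ω = 1} with hsdef
  set t : Set Ω := {ω | Y ω = 1} with htdef
  have hs : MeasurableSet s := hmYs (measurableSet_singleton 1)
  have ht : MeasurableSet t := hmY (measurableSet_singleton 1)
  -- P t = ofReal p * P s
  have hsplit : P (t ∩ s) + P (t \ s) = P t := measure_inter_add_diff t hs
  have hdiff : P (t \ s) = 0 := by
    refine measure_mono_null ?_ hnofp
    intro ω hω
    rcases hYs ω with h0 | h1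
    · exact ⟨hω.1, h0⟩
    · exact absurd h1 hω.2
  have hts : P (t ∩ s) = P {ω | Y ω = 1 ∧ Ystar ω = 1} := rfl
  have hPt : P t = ENNReal.ofReal p * P s := by
    rw [← hsplit, hdiff, add_zero, hts, hprop]
  have hPtR : (P t).toReal = p * (P s).toReal := by
    rw [hPt, ENNReal.toReal_mul, ENNReal.toReal_ofReal hp0.le]
  rw [show (fun ω => if Ystar ω = 1 then lp yhat else lm yhat)
        = fun ω => if ω ∈ s then lp yhat else lm yhat from rfl,
      show (fun ω => if Y ω = 1 then p⁻¹ * (lp yhat + (p - 1) * lm yhat) else lm yhat)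
        = fun ω => if ω ∈ t then p⁻¹ * (lp yhat + (p - 1) * lm yhat) else lm yhat from rfl,
      integral_ite_mem P s hs, integral_ite_mem P t ht, hPtR]
  field_simp
  ring
end

section
/- (Corollary, multi-label case) In a multi-label setting with N labels, suppose for each label i the pair (Yᵢ, Yᵢ*) of {0,1}-valued random variables satisfies the propensity model with propensity pᵢ ∈ (0,1], i.e. P(Yᵢ=1, Yᵢ*=0) = 0, P(Yᵢ*=1) > 0 and P(Yᵢ=1 | Yᵢ*=1) = pᵢ. Let L*(y, ŷ) = Σᵢ₌₁ᴺ lᵢ*(yᵢ, ŷᵢ) where each lᵢ* decomposes as lᵢ*(1,ŷ) = lᵢ*₊(ŷ), lᵢ*(0,ŷ) = lᵢ*₋(ŷ), and let lᵢ(1,ŷ) := pᵢ⁻¹ (lᵢ*₊(ŷ) + (pᵢ−1) lᵢ*₋(ŷ)), lᵢ(0,ŷ) := lᵢ*₋(ŷ). Then with L(y, ŷ) := Σᵢ₌₁ᴺ lᵢ(yᵢ, ŷᵢ), for every fixed prediction vector ŷ ∈ ℝᴺ, E[L*(Y*, ŷ)] = E[L(Y, ŷ)]. -/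
open MeasureTheory

lemma ite_eq_indicator_add {Ω : Type*} (X : Ω → ℝ) (a b : ℝ) :
    (fun ω => if X ω = 1 then a else b)
      = fun ω => Set.indicator {ω | X ω = 1} (fun _ => a - b) ω + b := by
  funext ω
  by_cases h : X ω = 1 <;> simp [Set.indicator, h]

lemma integrable_ite_one {Ω : Type*} [MeasurableSpace Ω] (P : Measure Ω)
    [IsProbabilityMeasure P] (X : Ω → ℝ) (hX : Measurable X) (a b : ℝ) :
    Integrable (fun ω => if X ω = 1 then a else b) P := by
  rw [ite_eq_indicator_add]
  exact ((integrable_const (a - b)).indicator (hX (measurableSet_singleton 1))).add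
    (integrable_const b)

lemma integral_ite_one {Ω : Type*} [MeasurableSpace Ω] (P : Measure Ω)
    [IsProbabilityMeasure P] (X : Ω → ℝ) (hX : Measurable X) (a b : ℝ) :
    ∫ ω, (if X ω = 1 then a else b) ∂P
      = b + (a - b) * (P {ω | X ω = 1}).toReal := by
  rw [ite_eq_indicator_add]
  have hS : MeasurableSet {ω | X ω = 1} := hX (measurableSet_singleton 1)
  rw [integral_add ((integrable_const (a - b)).indicator hS) (integrable_const b),
    integral_indicator_const _ hS, integral_const]
  simp [mul_comm]
  rw [measureReal_def]
  ring

/-- Corollary (multi-label case): if each label pair `(Yᵢ, Yᵢ*)` satisfies the propensity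
model with propensity `pᵢ`, then the sum over labels of the per-label reweighted losses is
an unbiased estimate of the sum of the true per-label losses:
`E[Σᵢ lᵢ*(Yᵢ*, ŷᵢ)] = E[Σᵢ lᵢ(Yᵢ, ŷᵢ)]`. -/
theorem unbiased_estimator_multilabel
    {Ω : Type*} [MeasurableSpace Ω] (P : Measure Ω) [IsProbabilityMeasure P]
    (N : ℕ) (Y Ystar : Fin N → Ω → ℝ)
    (hY : ∀ i ω, Y i ω = 0 ∨ Y i ω = 1) (hYs : ∀ i ω, Ystar i ω = 0 ∨ Ystar i ω = 1)
    (hmY : ∀ i, Measurable (Y i)) (hmYs : ∀ i, Measurable (Ystar i))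
    (p : Fin N → ℝ) (hp0 : ∀ i, 0 < p i) (hp1 : ∀ i, p i ≤ 1)
    (hnofp : ∀ i, P {ω | Y i ω = 1 ∧ Ystar i ω = 0} = 0)
    (hpos : ∀ i, 0 < P {ω | Ystar i ω = 1})
    (hprop : ∀ i, P {ω | Y i ω = 1 ∧ Ystar i ω = 1}
        = ENNReal.ofReal (p i) * P {ω | Ystar i ω = 1})
    (lp lm : Fin N → ℝ → ℝ) (yhat : Fin N → ℝ) :
    ∫ ω, (∑ i, if Ystar i ω = 1 then lp i (yhat i) else lm i (yhat i)) ∂P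
      = ∫ ω, (∑ i, if Y i ω = 1
            then (p i)⁻¹ * (lp i (yhat i) + (p i - 1) * lm i (yhat i))
            else lm i (yhat i)) ∂P := by
  rw [integral_finset_sum _ (fun i _ => integrable_ite_one P _ (hmYs i) _ _),
    integral_finset_sum _ (fun i _ => integrable_ite_one P _ (hmY i) _ _)]
  refine Finset.sum_congr rfl (fun i _ => ?_)
  rw [integral_ite_one P _ (hmYs i), integral_ite_one P _ (hmY i)]
  -- P {Y i = 1} = ofReal (p i) * P {Ystar i = 1}
  have hYeq : P {ω | Y i ω = 1} = ENNReal.ofReal (p i) * P {ω | Ystar i ω = 1} := by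
    rw [← hprop i]
    apply le_antisymm
    · have hsub : {ω | Y i ω = 1} ⊆
          {ω | Y i ω = 1 ∧ Ystar i ω = 1} ∪ {ω | Y i ω = 1 ∧ Ystar i ω = 0} := by
        intro ω hω
        rcases hYs i ω with h | h
        · exact Or.inr ⟨hω, h⟩
        · exact Or.inl ⟨hω, h⟩
      calc P {ω | Y i ω = 1} ≤ _ := measure_mono hsub
        _ ≤ P {ω | Y i ω = 1 ∧ Ystar i ω = 1} + P {ω | Y i ω = 1 ∧ Ystar i ω = 0} :=
            measure_union_le _ _
        _ = P {ω | Y i ω = 1 ∧ Ystar i ω = 1} := by rw [hnofp i, add_zero]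
    · exact measure_mono (fun ω hω => hω.1)
  have hfin : P {ω | Ystar i ω = 1} ≠ ⊤ := measure_ne_top P _
  have htr : (P {ω | Y i ω = 1}).toReal = p i * (P {ω | Ystar i ω = 1}).toReal := by
    rw [hYeq, ENNReal.toReal_mul, ENNReal.toReal_ofReal (hp0 i).le]
  rw [htr]
  have hpne : p i ≠ 0 := (hp0 i).ne'
  field_simp
  ring
end

section
/- (Unbiased squared error) For every fixed ŷ ∈ ℝ, the expected squared error with respect to the true label equals the expectation of the propensity-reweighted loss: E[(Y* − ŷ)²] = E[ Y (1 − 2ŷ)/p + ŷ² ]. -/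
open MeasureTheory

lemma binary_integral {Ω : Type*} [MeasurableSpace Ω] (P : Measure Ω)
    [IsProbabilityMeasure P] (f : Ω → ℝ) (hf : ∀ ω, f ω = 0 ∨ f ω = 1)
    (hm : Measurable f) :
    Integrable f P ∧ ∫ ω, f ω ∂P = (P {ω | f ω = 1}).toReal := by
  have hs : MeasurableSet {ω | f ω = 1} := hm (measurableSet_singleton 1)
  have hfi : f = Set.indicator {ω | f ω = 1} (fun _ => (1 : ℝ)) := by
    funext ω
    rcases hf ω with h | h <;> simp [Set.indicator, h]
  constructor
  · rw [hfi]
    exact (integrable_indicator_iff hs).2 (integrableOn_const (measure_ne_top P _))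
  · rw [hfi]
    simpa [measureReal_def, Pi.one_def] using integral_indicator_one (μ := P) hs

/-- Unbiased squared error: `E[(Y* − ŷ)²] = E[Y (1 − 2ŷ)/p + ŷ²]`. -/
theorem unbiased_squared_error
    {Ω : Type*} [MeasurableSpace Ω] (P : Measure Ω) [IsProbabilityMeasure P]
    (Y Ystar : Ω → ℝ)
    (hY : ∀ ω, Y ω = 0 ∨ Y ω = 1) (hYs : ∀ ω, Ystar ω = 0 ∨ Ystar ω = 1)
    (hmY : Measurable Y) (hmYs : Measurable Ystar)
    (p : ℝ) (hp0 : 0 < p) (hp1 : p ≤ 1)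
    (hnofp : P {ω | Y ω = 1 ∧ Ystar ω = 0} = 0)
    (hpos : 0 < P {ω | Ystar ω = 1})
    (hprop : P {ω | Y ω = 1 ∧ Ystar ω = 1} = ENNReal.ofReal p * P {ω | Ystar ω = 1})
    (yhat : ℝ) :
    ∫ ω, (Ystar ω - yhat) ^ 2 ∂P
      = ∫ ω, (Y ω * (1 - 2 * yhat) / p + yhat ^ 2) ∂P := by
  obtain ⟨hYint, hYeq⟩ := binary_integral P Y hY hmY
  obtain ⟨hYsint, hYseq⟩ := binary_integral P Ystar hYs hmYs
  -- P(Y=1) = p * P(Y*=1)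
  have hsplit : P {ω | Y ω = 1} = ENNReal.ofReal p * P {ω | Ystar ω = 1} := by
    have hdecomp : {ω | Y ω = 1} =
        {ω | Y ω = 1 ∧ Ystar ω = 1} ∪ {ω | Y ω = 1 ∧ Ystar ω = 0} := by
      ext ω
      simp only [Set.mem_setOf_eq, Set.mem_union]
      constructor
      · intro h; rcases hYs ω with h2 | h2
        · exact Or.inr ⟨h, h2⟩
        · exact Or.inl ⟨h, h2⟩
      · rintro (⟨h, _⟩ | ⟨h, _⟩) <;> exact h
    rw [← hprop]
    rw [hdecomp]
    refine le_antisymm ((measure_union_le _ _).trans ?_) (measure_mono Set.subset_union_left)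
    rw [hnofp, add_zero]
  have hab : (P {ω | Y ω = 1}).toReal = p * (P {ω | Ystar ω = 1}).toReal := by
    rw [hsplit, ENNReal.toReal_mul, ENNReal.toReal_ofReal hp0.le]
  set b := (P {ω | Ystar ω = 1}).toReal with hb
  -- rewrite LHS integrand
  have hL : (fun ω => (Ystar ω - yhat) ^ 2)
      = fun ω => Ystar ω * (1 - 2 * yhat) + yhat ^ 2 := by
    funext ω
    rcases hYs ω with h | h <;> rw [h] <;> ring
  have hR : (fun ω => Y ω * (1 - 2 * yhat) / p + yhat ^ 2)
      = fun ω => Y ω * ((1 - 2 * yhat) / p) + yhat ^ 2 := by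
    funext ω; ring
  rw [hL, hR]
  rw [integral_add (hYsint.mul_const _) (integrable_const _),
      integral_add (hYint.mul_const _) (integrable_const _),
      integral_mul_const, integral_mul_const, hYeq, hYseq, hab]
  field_simp
end

section
/- (Unbiased hinge loss) Write Z := 2Y − 1 and Z* := 2Y* − 1 (values in {−1,+1}), and let [t]₊ := max(t, 0). For every fixed ẑ ∈ ℝ, E[[1 − Z* ẑ]₊] = E[ ((Z+1)/2) · ([1 − ẑ]₊ + (p−1)[1 + ẑ]₊)/p + ((1−Z)/2) · [1 + ẑ]₊ ]. -/
open MeasureTheory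

/-- Unbiased hinge loss: with `Z = 2Y − 1`, `Z* = 2Y* − 1`,
`E[[1 − Z* ẑ]₊] = E[((Z+1)/2)·([1 − ẑ]₊ + (p−1)[1 + ẑ]₊)/p + ((1−Z)/2)·[1 + ẑ]₊]`. -/
theorem unbiased_hinge_loss
    {Ω : Type*} [MeasurableSpace Ω] (P : Measure Ω) [IsProbabilityMeasure P]
    (Y Ystar : Ω → ℝ)
    (hY : ∀ ω, Y ω = 0 ∨ Y ω = 1) (hYs : ∀ ω, Ystar ω = 0 ∨ Ystar ω = 1)
    (hmY : Measurable Y) (hmYs : Measurable Ystar)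
    (p : ℝ) (hp0 : 0 < p) (hp1 : p ≤ 1)
    (hnofp : P {ω | Y ω = 1 ∧ Ystar ω = 0} = 0)
    (hpos : 0 < P {ω | Ystar ω = 1})
    (hprop : P {ω | Y ω = 1 ∧ Ystar ω = 1} = ENNReal.ofReal p * P {ω | Ystar ω = 1})
    (zhat : ℝ) :
    ∫ ω, max (1 - (2 * Ystar ω - 1) * zhat) 0 ∂P
      = ∫ ω, (((2 * Y ω - 1) + 1) / 2
              * ((max (1 - zhat) 0 + (p - 1) * max (1 + zhat) 0) / p)
            + (1 - (2 * Y ω - 1)) / 2 * max (1 + zhat) 0) ∂P := by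
  have hsY : MeasurableSet {ω | Y ω = 1} := hmY (measurableSet_singleton 1)
  have hsYs : MeasurableSet {ω | Ystar ω = 1} := hmYs (measurableSet_singleton 1)
  have hYind : Y = Set.indicator {ω | Y ω = 1} (fun _ => (1:ℝ)) := by
    funext ω; rcases hY ω with h | h <;> simp [Set.indicator, h]
  have hYsind : Ystar = Set.indicator {ω | Ystar ω = 1} (fun _ => (1:ℝ)) := by
    funext ω; rcases hYs ω with h | h <;> simp [Set.indicator, h]
  have hIntY : Integrable Y P := by rw [hYind]; exact (integrable_const 1).indicator hsY
  have hIntYs : Integrable Ystar P := by rw [hYsind]; exact (integrable_const 1).indicator hsYs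
  set a := max (1 - zhat) 0 with ha
  set b := max (1 + zhat) 0 with hb
  set q := (P {ω | Ystar ω = 1}).toReal with hq
  set m := (P {ω | Y ω = 1}).toReal with hm
  have hiY : ∫ ω, Y ω ∂P = m := by
    rw [hYind, integral_indicator_const _ hsY]; simp [hm, Measure.real]
  have hiYs : ∫ ω, Ystar ω ∂P = q := by
    rw [hYsind, integral_indicator_const _ hsYs]; simp [hq, Measure.real]
  have hmq : m = p * q := by
    have hsplit : P {ω | Y ω = 1}
        = P ({ω | Y ω = 1} ∩ {ω | Ystar ω = 1}) + P ({ω | Y ω = 1} \ {ω | Ystar ω = 1}) :=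
      (measure_inter_add_diff _ hsYs).symm
    have h1 : {ω | Y ω = 1} ∩ {ω | Ystar ω = 1} = {ω | Y ω = 1 ∧ Ystar ω = 1} := rfl
    have h2 : {ω | Y ω = 1} \ {ω | Ystar ω = 1} = {ω | Y ω = 1 ∧ Ystar ω = 0} := by
      ext ω
      simp only [Set.mem_diff, Set.mem_setOf_eq]
      constructor
      · rintro ⟨h, h'⟩; exact ⟨h, (hYs ω).resolve_right h'⟩
      · rintro ⟨h, h'⟩; exact ⟨h, by rw [h']; norm_num⟩
    rw [h1, h2, hprop, hnofp, add_zero] at hsplit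
    have h3 : (P {ω | Y ω = 1}).toReal
        = (ENNReal.ofReal p * P {ω | Ystar ω = 1}).toReal := by rw [hsplit]
    rwa [ENNReal.toReal_mul, ENNReal.toReal_ofReal hp0.le] at h3
  have hLfun : ∀ ω, max (1 - (2 * Ystar ω - 1) * zhat) 0
      = Ystar ω * (a - b) + b := by
    intro ω
    rcases hYs ω with h | h <;> rw [h] <;> norm_num [ha, hb]
  have hRfun : ∀ ω, (((2 * Y ω - 1) + 1) / 2
              * ((a + (p - 1) * b) / p)
            + (1 - (2 * Y ω - 1)) / 2 * b)
      = Y ω * ((a + (p - 1) * b) / p - b) + b := by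
    intro ω
    rcases hY ω with h | h <;> rw [h] <;> ring
  have hL : ∫ ω, max (1 - (2 * Ystar ω - 1) * zhat) 0 ∂P = q * (a - b) + b := by
    rw [show (fun ω => max (1 - (2 * Ystar ω - 1) * zhat) 0)
        = fun ω => Ystar ω * (a - b) + b from funext hLfun]
    rw [integral_add (hIntYs.mul_const _) (integrable_const b),
      integral_mul_const, hiYs, integral_const]
    simp
  have hR : ∫ ω, (((2 * Y ω - 1) + 1) / 2
              * ((a + (p - 1) * b) / p)
            + (1 - (2 * Y ω - 1)) / 2 * b) ∂P
      = m * ((a + (p - 1) * b) / p - b) + b := by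
    rw [show (fun ω => (((2 * Y ω - 1) + 1) / 2 * ((a + (p - 1) * b) / p)
            + (1 - (2 * Y ω - 1)) / 2 * b))
        = fun ω => Y ω * ((a + (p - 1) * b) / p - b) + b from funext hRfun]
    rw [integral_add (hIntY.mul_const _) (integrable_const b),
      integral_mul_const, hiY, integral_const]
    simp
  rw [hL, hR, hmq]
  field_simp
  ring
end

section
/- (Non-convexity of the unbiased hinge estimate) For every p with 0 < p < 1, the function ẑ ↦ p⁻¹ ([1 − ẑ]₊ + (p − 1)[1 + ẑ]₊) from ℝ to ℝ is not convex. -/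
/-- Non-convexity of the unbiased hinge estimate: for `0 < p < 1`, the function
`ẑ ↦ p⁻¹ ([1 − ẑ]₊ + (p − 1)[1 + ẑ]₊)` is not convex on ℝ. -/
theorem unbiased_hinge_positive_part_not_convex
    (p : ℝ) (hp0 : 0 < p) (hp1 : p < 1) :
    ¬ ConvexOn ℝ Set.univ
        (fun zhat : ℝ => p⁻¹ * (max (1 - zhat) 0 + (p - 1) * max (1 + zhat) 0)) := by
  intro h
  have := h.2 (Set.mem_univ (-2 : ℝ)) (Set.mem_univ (0 : ℝ))
    (by norm_num : (0:ℝ) ≤ 1/2) (by norm_num : (0:ℝ) ≤ 1/2) (by norm_num)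
  simp only at this
  have h1 : max (1 - (-2:ℝ)) 0 = 3 := by norm_num
  have h2 : max (1 + (-2:ℝ)) 0 = 0 := by norm_num
  have h3 : max (1 - (0:ℝ)) 0 = 1 := by norm_num
  have h4 : max (1 + (0:ℝ)) 0 = 1 := by norm_num
  have h5 : (1/2 : ℝ) • (-2:ℝ) + (1/2:ℝ) • (0:ℝ) = -1 := by norm_num
  rw [h5, h1, h2, h3, h4] at this
  have h6 : max (1 - (-1:ℝ)) 0 = 2 := by norm_num
  have h7 : max (1 + (-1:ℝ)) 0 = 0 := by norm_num
  rw [h6, h7] at this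
  have hp : p⁻¹ * p = 1 := inv_mul_cancel₀ hp0.ne'
  simp only [smul_eq_mul] at this
  nlinarith [mul_pos (inv_pos.mpr hp0) hp0]
end

section
/- (Reweighted squared hinge loss as a convex upper bound on the shifted unbiased 0-1 loss) For 0 < p ≤ 1, let the shifted reweighted 0-1 loss be l̃(z, ẑ) := (2/p − 1)·1{ẑ < 0} if z = 1 and 1{ẑ ≥ 0} if z = −1, and let L_cv(z, ẑ) := ((z(1 − p) + 1)/p)·([1 − z ẑ]₊)² where [t]₊ := max(t, 0). Then for each z ∈ {−1, 1}, the function ẑ ↦ L_cv(z, ẑ) is convex on ℝ and satisfies L_cv(z, ẑ) ≥ l̃(z, ẑ) for all ẑ ∈ ℝ. -/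
lemma sqmax_convex : ConvexOn ℝ Set.univ (fun t : ℝ => (max t 0) ^ 2) := by
  refine ⟨convex_univ, fun x _ y _ a b ha hb hab => ?_⟩
  simp only [smul_eq_mul]
  have hx := le_max_right x 0
  have hy := le_max_right y 0
  have hx' := le_max_left x 0
  have hy' := le_max_left y 0
  have h1 : max (a * x + b * y) 0 ≤ a * max x 0 + b * max y 0 := by
    apply max_le <;> nlinarith
  have h0 : (0:ℝ) ≤ max (a * x + b * y) 0 := le_max_right _ _
  nlinarith [mul_self_le_mul_self h0 h1, sq_nonneg (max x 0 - max y 0), mul_nonneg ha hb]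

/-- Reweighted squared hinge loss as a convex upper bound on the shifted unbiased 0-1 loss.
For each `z ∈ {−1, 1}`, `ẑ ↦ L_cv(z, ẑ) = ((z(1−p)+1)/p)·([1 − z ẑ]₊)²` is convex on ℝ and
dominates the shifted reweighted 0-1 loss `l̃(z, ẑ)`. -/
theorem reweighted_squared_hinge_convex_upper_bound
    (p : ℝ) (hp0 : 0 < p) (hp1 : p ≤ 1) :
    ∀ z ∈ ({-1, 1} : Set ℝ),
      ConvexOn ℝ Set.univ
          (fun zhat : ℝ => (z * (1 - p) + 1) / p * (max (1 - z * zhat) 0) ^ 2) ∧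
      ∀ zhat : ℝ,
        (if z = 1 then (if zhat < 0 then 2 / p - 1 else (0 : ℝ))
         else (if 0 ≤ zhat then (1 : ℝ) else 0))
          ≤ (z * (1 - p) + 1) / p * (max (1 - z * zhat) 0) ^ 2 := by
  intro z hz
  have hc : 0 ≤ (z * (1 - p) + 1) / p := by
    rcases hz with h | h <;> subst h
    · apply div_nonneg _ hp0.le; nlinarith
    · apply div_nonneg _ hp0.le; nlinarith
  constructor
  · have hcomp := (sqmax_convex.comp_affineMap (AffineMap.lineMap (1:ℝ) (1 - z))).smul hc
    have heq : (fun zhat : ℝ => (z * (1 - p) + 1) / p * (max (1 - z * zhat) 0) ^ 2) =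
        fun x => ((z * (1 - p) + 1) / p) •
          (((fun t : ℝ => (max t 0) ^ 2) ∘ (AffineMap.lineMap (1:ℝ) (1 - z))) x) := by
      funext x
      have : (AffineMap.lineMap (1:ℝ) (1 - z)) x = 1 - z * x := by
        simp [AffineMap.lineMap_apply]; ring
      simp [this, smul_eq_mul]
    rw [heq]
    simpa using hcomp
  · intro x
    rcases hz with h | h <;> subst h
    · rw [if_neg (by norm_num)]
      by_cases hx : 0 ≤ x
      · rw [if_pos hx]
        have hm : (1:ℝ) ≤ max (1 - (-1) * x) 0 := le_max_of_le_left (by linarith)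
        have hc1 : ((-1:ℝ) * (1 - p) + 1) / p = 1 := by field_simp; ring
        rw [hc1]
        nlinarith [hm]
      · rw [if_neg hx]
        positivity
    · rw [if_pos rfl]
      by_cases hx : x < 0
      · rw [if_pos hx]
        have hm : (1:ℝ) ≤ max (1 - 1 * x) 0 := le_max_of_le_left (by linarith)
        have hc1 : ((1:ℝ) * (1 - p) + 1) / p = 2 / p - 1 := by field_simp; ring
        rw [hc1]
        have h2 : 0 ≤ 2 / p - 1 := by
          rw [sub_nonneg, le_div_iff₀ hp0]; linarith
        nlinarith [mul_nonneg h2 (by nlinarith : (0:ℝ) ≤ (max (1 - 1 * x) 0) ^ 2 - 1)]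
      · rw [if_neg hx]
        positivity
end

section
/- (Unbiased binary cross-entropy) For every fixed ŷ with 0 < ŷ < 1, the expected binary cross-entropy with respect to the true label equals the expectation of the propensity-reweighted loss: E[ −Y* log ŷ − (1 − Y*) log(1 − ŷ) ] = E[ −(Y/p) log ŷ − (1 − Y/p) log(1 − ŷ) ]. -/
open MeasureTheory

lemma indicator_int {Ω : Type*} [MeasurableSpace Ω] (P : Measure Ω) [IsProbabilityMeasure P]
    (Z : Ω → ℝ) (hZ : ∀ ω, Z ω = 0 ∨ Z ω = 1) (hmZ : Measurable Z) :
    Integrable Z P ∧ ∫ ω, Z ω ∂P = (P {ω | Z ω = 1}).toReal := by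
  have hset : MeasurableSet {ω | Z ω = 1} := hmZ (measurableSet_singleton 1)
  have heq : Z = Set.indicator {ω | Z ω = 1} (fun _ => (1:ℝ)) := by
    funext ω
    rcases hY : hZ ω with h | h <;> simp [Set.indicator, h]
  constructor
  · rw [heq]
    exact (integrable_indicator_iff hset).2 (integrableOn_const (measure_ne_top P _) (by simp))
  · rw [heq, integral_indicator_const _ hset]
    simp
    rfl

/-- Unbiased binary cross-entropy: for `0 < ŷ < 1`,
`E[−Y* log ŷ − (1 − Y*) log(1 − ŷ)] = E[−(Y/p) log ŷ − (1 − Y/p) log(1 − ŷ)]`. -/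
theorem unbiased_binary_cross_entropy
    {Ω : Type*} [MeasurableSpace Ω] (P : Measure Ω) [IsProbabilityMeasure P]
    (Y Ystar : Ω → ℝ)
    (hY : ∀ ω, Y ω = 0 ∨ Y ω = 1) (hYs : ∀ ω, Ystar ω = 0 ∨ Ystar ω = 1)
    (hmY : Measurable Y) (hmYs : Measurable Ystar)
    (p : ℝ) (hp0 : 0 < p) (hp1 : p ≤ 1)
    (hnofp : P {ω | Y ω = 1 ∧ Ystar ω = 0} = 0)
    (hpos : 0 < P {ω | Ystar ω = 1})
    (hprop : P {ω | Y ω = 1 ∧ Ystar ω = 1} = ENNReal.ofReal p * P {ω | Ystar ω = 1})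
    (yhat : ℝ) (hy0 : 0 < yhat) (hy1 : yhat < 1) :
    ∫ ω, (-(Ystar ω) * Real.log yhat - (1 - Ystar ω) * Real.log (1 - yhat)) ∂P
      = ∫ ω, (-(Y ω / p) * Real.log yhat - (1 - Y ω / p) * Real.log (1 - yhat)) ∂P := by
  set A := Real.log yhat
  set B := Real.log (1 - yhat)
  obtain ⟨hIY, hEY⟩ := indicator_int P Y hY hmY
  obtain ⟨hIYs, hEYs⟩ := indicator_int P Ystar hYs hmYs
  -- P {Y = 1} = P {Y = 1 ∧ Ystar = 1}
  have hsub : {ω | Y ω = 1} ⊆ {ω | Y ω = 1 ∧ Ystar ω = 1} ∪ {ω | Y ω = 1 ∧ Ystar ω = 0} := by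
    intro ω hω
    rcases hYs ω with h | h
    · exact Or.inr ⟨hω, h⟩
    · exact Or.inl ⟨hω, h⟩
  have hmeas1 : P {ω | Y ω = 1} = P {ω | Y ω = 1 ∧ Ystar ω = 1} := by
    apply le_antisymm
    · calc P {ω | Y ω = 1} ≤ P ({ω | Y ω = 1 ∧ Ystar ω = 1} ∪ {ω | Y ω = 1 ∧ Ystar ω = 0}) :=
            measure_mono hsub
        _ ≤ P {ω | Y ω = 1 ∧ Ystar ω = 1} + P {ω | Y ω = 1 ∧ Ystar ω = 0} := measure_union_le _ _
        _ = P {ω | Y ω = 1 ∧ Ystar ω = 1} := by rw [hnofp, add_zero]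
    · exact measure_mono (fun ω hω => hω.1)
  have hSfin : P {ω | Ystar ω = 1} ≠ ⊤ := measure_ne_top P _
  have hEY' : ∫ ω, Y ω ∂P = p * (P {ω | Ystar ω = 1}).toReal := by
    rw [hEY, hmeas1, hprop, ENNReal.toReal_mul, ENNReal.toReal_ofReal hp0.le]
  -- key: ∫ Y/p = ∫ Ystar
  have hkey : ∫ ω, Y ω / p ∂P = ∫ ω, Ystar ω ∂P := by
    rw [integral_div, hEY', hEYs, mul_comm, mul_div_assoc, div_self hp0.ne', mul_one]
  -- rewrite both integrands as affine functions
  have hrw : ∀ (t : ℝ), -t * A - (1 - t) * B = t * (B - A) - B := by intro t; ring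
  calc ∫ ω, (-(Ystar ω) * A - (1 - Ystar ω) * B) ∂P
      = ∫ ω, (Ystar ω * (B - A) - B) ∂P := by simp_rw [hrw]
    _ = (∫ ω, Ystar ω ∂P) * (B - A) - B := by
        rw [integral_sub (hIYs.mul_const _) (integrable_const B),
          integral_mul_const, integral_const]
        simp
    _ = (∫ ω, Y ω / p ∂P) * (B - A) - B := by rw [hkey]
    _ = ∫ ω, (Y ω / p * (B - A) - B) ∂P := by
        rw [integral_sub ((hIY.div_const p).mul_const _) (integrable_const B),
          integral_mul_const, integral_const]
        simp
    _ = ∫ ω, (-(Y ω / p) * A - (1 - Y ω / p) * B) ∂P := by simp_rw [hrw]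
end
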